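/- Let F_q be a finite field, H_A ∈ F_q^{m_A×n_A}, H_B ∈ F_q^{m_B×n_B} matrices with rank(H_A) < min(m_A, n_A) and rank(H_B) < min(m_B, n_B) (so that neither H_A, H_B nor their transposes are full rank), and let H_X = [I_{m_A} ⊗ H_B | H_A ⊗ I_{m_B}], H_Z = [H_Aᵀ ⊗ I_{n_B} | −I_{n_A} ⊗ H_Bᵀ]. Set d_A = min{wt(v) : v ∈ ker H_A, v ≠ 0}, d_Aᵀ = min{wt(v) : v ∈ ker H_Aᵀ, v ≠ 0}, and similarly d_B, d_Bᵀ. Then ker H_X \ rowspace(H_Z) and ker H_Z \ rowspace(H_X) are nonempty, min{wt(v) : v ∈ ker H_X \ rowspace(H_Z)} ≤ min{d_A, d_B}, and min{wt(v) : v ∈ ker H_Z \ rowspace(H_X)} ≤ min{d_Aᵀ, d_Bᵀ}. Consequently the distance of the qudit hypergraph product code satisfies d ≤ min{d_A, d_Aᵀ, d_B, d_Bᵀ}. -/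

import Mathlib

open Matrix Kronecker Finset

section Helpers

variable {F : Type*} [Field F] [DecidableEq F]

omit [DecidableEq F] in
lemma exists_ker_vec {m n : ℕ} (M : Matrix (Fin m) (Fin n) F) (h : M.rank < n) :
    ∃ x : Fin n → F, M.mulVec x = 0 ∧ x ≠ 0 := by
  have hrn : Module.finrank F (LinearMap.range M.mulVecLin)
      + Module.finrank F (LinearMap.ker M.mulVecLin) = n := by
    simpa using LinearMap.finrank_range_add_finrank_ker M.mulVecLin
  have hk : LinearMap.ker M.mulVecLin ≠ ⊥ := by
    intro hb
    rw [hb, finrank_bot, add_zero] at hrn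
    rw [Matrix.rank, hrn] at h
    exact lt_irrefl _ h
  obtain ⟨x, hx, hxne⟩ := Submodule.exists_mem_ne_zero_of_ne_bot hk
  exact ⟨x, by simpa [Matrix.mulVecLin_apply] using hx, hxne⟩

omit [DecidableEq F] in
lemma not_mem_span_rows {m n : Type*} [Fintype m] [Fintype n]
    (M : Matrix m n F) (u ψ : n → F)
    (hrows : ∀ i, ∑ j, M i j * ψ j = 0) (hu : ∑ j, u j * ψ j ≠ 0) :
    u ∉ Submodule.span F (Set.range M) := by
  intro h
  apply hu
  replace h := (Submodule.mem_span_range_iff_exists_fun F).mp h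
  obtain ⟨c, hc⟩ := h
  rw [← hc]
  calc ∑ j, (∑ i, c i • M i) j * ψ j
      = ∑ j, ∑ i, c i * (M i j * ψ j) := by
        simp [Finset.sum_apply, Finset.sum_mul, mul_assoc]
    _ = ∑ i, c i * ∑ j, M i j * ψ j := by
        rw [Finset.sum_comm]; simp [Finset.mul_sum]
    _ = 0 := by simp [hrows]

lemma ham_elim_left {A B : Type*} [Fintype A] [Fintype B] [DecidableEq A] [DecidableEq B]
    (f : A → F) : hammingNorm (Sum.elim f (0 : B → F)) = hammingNorm f := by
  simp only [hammingNorm, Finset.card_filter, Fintype.sum_sum_type]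
  simp
  refine Finset.sum_congr rfl fun a _ => ?_
  split_ifs <;> simp_all

lemma ham_elim_right {A B : Type*} [Fintype A] [Fintype B] [DecidableEq A] [DecidableEq B]
    (g : B → F) : hammingNorm (Sum.elim (0 : A → F) g) = hammingNorm g := by
  simp only [hammingNorm, Finset.card_filter, Fintype.sum_sum_type]
  simp
  refine Finset.sum_congr rfl fun a _ => ?_
  split_ifs <;> simp_all

lemma ham_mul_single_right {A B : Type*} [Fintype A] [Fintype B] [DecidableEq A] [DecidableEq B]
    (x : A → F) (l0 : B) :
    hammingNorm (fun p : A × B => x p.1 * (Pi.single l0 1 : B → F) p.2) = hammingNorm x := by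
  simp only [hammingNorm, Finset.card_filter, Fintype.sum_prod_type]
  refine Finset.sum_congr rfl fun a _ => ?_
  by_cases hxa : x a = 0
  · simp [hxa]
  · simp [Pi.single_apply, mul_ite, hxa, Finset.filter_eq']

lemma ham_mul_single_left {A B : Type*} [Fintype A] [Fintype B] [DecidableEq A] [DecidableEq B]
    (z : B → F) (a0 : A) :
    hammingNorm (fun p : A × B => (Pi.single a0 1 : A → F) p.1 * z p.2) = hammingNorm z := by
  simp only [hammingNorm, Finset.card_filter, Fintype.sum_prod_type]
  rw [Finset.sum_eq_single a0]
  · simp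
  · intro b _ hb; simp [Pi.single_apply, hb]
  · simp

omit [DecidableEq F] in
lemma kron_pair {K L K' L' : Type*} [Fintype K'] [Fintype L']
    (A : Matrix K K' F) (B : Matrix L L' F) (i : K × L) (f : K' → F) (g : L' → F) :
    ∑ p : K' × L', (A ⊗ₖ B) i p * (f p.1 * g p.2)
      = (∑ k, A i.1 k * f k) * (∑ l, B i.2 l * g l) := by
  rw [Finset.sum_mul_sum, Fintype.sum_prod_type]
  refine Finset.sum_congr rfl fun k _ => Finset.sum_congr rfl fun l _ => ?_
  simp [Matrix.kroneckerMap_apply]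
  ring

omit [DecidableEq F] in
lemma single_dot {A : Type*} [Fintype A] [DecidableEq A] (x : A → F) (a0 : A) :
    ∑ a, x a * (Pi.single a0 1 : A → F) a = x a0 := by
  simp [Pi.single_apply, mul_ite]

end Helpers

/-- upper bound on the distance of a qudit hypergraph product code.  If
`rank H_A < min(m_A, n_A)` and `rank H_B < min(m_B, n_B)`, then both logical sets
`ker H_X \ rowspace H_Z` and `ker H_Z \ rowspace H_X` are nonempty, the minimum weight
of the first is `≤ min{d_A, d_B}`, and the minimum weight of the second is
`≤ min{d_Aᵀ, d_Bᵀ}`; consequently `d ≤ min{d_A, d_Aᵀ, d_B, d_Bᵀ}`. -/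
theorem hgp_distance_upper_bound
    {F : Type*} [Field F] [Fintype F] [DecidableEq F] (mA nA mB nB : ℕ)
    (HA : Matrix (Fin mA) (Fin nA) F) (HB : Matrix (Fin mB) (Fin nB) F)
    (hrA : HA.rank < min mA nA) (hrB : HB.rank < min mB nB)
    (HX : Matrix (Fin mA × Fin mB) ((Fin mA × Fin nB) ⊕ (Fin nA × Fin mB)) F)
    (HZ : Matrix (Fin nA × Fin nB) ((Fin mA × Fin nB) ⊕ (Fin nA × Fin mB)) F)
    (hHX : HX = fromCols ((1 : Matrix (Fin mA) (Fin mA) F) ⊗ₖ HB)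
        (HA ⊗ₖ (1 : Matrix (Fin mB) (Fin mB) F)))
    (hHZ : HZ = fromCols (HAᵀ ⊗ₖ (1 : Matrix (Fin nB) (Fin nB) F))
        (-((1 : Matrix (Fin nA) (Fin nA) F) ⊗ₖ HBᵀ)))
    (dA dB dAT dBT : ℕ)
    (hdA : dA = sInf {w : ℕ | ∃ v : Fin nA → F, HA.mulVec v = 0 ∧ v ≠ 0 ∧ hammingNorm v = w})
    (hdB : dB = sInf {w : ℕ | ∃ v : Fin nB → F, HB.mulVec v = 0 ∧ v ≠ 0 ∧ hammingNorm v = w})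
    (hdAT : dAT = sInf {w : ℕ | ∃ v : Fin mA → F, HAᵀ.mulVec v = 0 ∧ v ≠ 0 ∧ hammingNorm v = w})
    (hdBT : dBT = sInf {w : ℕ | ∃ v : Fin mB → F, HBᵀ.mulVec v = 0 ∧ v ≠ 0 ∧ hammingNorm v = w}) :
    (∃ v : ((Fin mA × Fin nB) ⊕ (Fin nA × Fin mB)) → F,
      HX.mulVec v = 0 ∧ v ∉ Submodule.span F (Set.range HZ)) ∧
    (∃ v : ((Fin mA × Fin nB) ⊕ (Fin nA × Fin mB)) → F,
      HZ.mulVec v = 0 ∧ v ∉ Submodule.span F (Set.range HX)) ∧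
    sInf {w : ℕ | ∃ v : ((Fin mA × Fin nB) ⊕ (Fin nA × Fin mB)) → F,
        HX.mulVec v = 0 ∧ v ∉ Submodule.span F (Set.range HZ) ∧ hammingNorm v = w}
      ≤ min dA dB ∧
    sInf {w : ℕ | ∃ v : ((Fin mA × Fin nB) ⊕ (Fin nA × Fin mB)) → F,
        HZ.mulVec v = 0 ∧ v ∉ Submodule.span F (Set.range HX) ∧ hammingNorm v = w}
      ≤ min dAT dBT := by
  -- rank bounds
  have hrAn : HA.rank < nA := lt_of_lt_of_le hrA (min_le_right _ _)
  have hrAm : HAᵀ.rank < mA := by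
    rw [Matrix.rank_transpose]; exact lt_of_lt_of_le hrA (min_le_left _ _)
  have hrBn : HB.rank < nB := lt_of_lt_of_le hrB (min_le_right _ _)
  have hrBm : HBᵀ.rank < mB := by
    rw [Matrix.rank_transpose]; exact lt_of_lt_of_le hrB (min_le_left _ _)
  -- minimal kernel vectors
  obtain ⟨x, hxker, hxne, hxw⟩ :
      ∃ v : Fin nA → F, HA.mulVec v = 0 ∧ v ≠ 0 ∧ hammingNorm v = dA := by
    obtain ⟨v0, h0, h0ne⟩ := exists_ker_vec HA hrAn
    have hne : {w : ℕ | ∃ v : Fin nA → F, HA.mulVec v = 0 ∧ v ≠ 0 ∧ hammingNorm v = w}.Nonempty :=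
      ⟨hammingNorm v0, v0, h0, h0ne, rfl⟩
    rw [hdA]; exact Nat.sInf_mem hne
  obtain ⟨z, hzker, hzne, hzw⟩ :
      ∃ v : Fin nB → F, HB.mulVec v = 0 ∧ v ≠ 0 ∧ hammingNorm v = dB := by
    obtain ⟨v0, h0, h0ne⟩ := exists_ker_vec HB hrBn
    have hne : {w : ℕ | ∃ v : Fin nB → F, HB.mulVec v = 0 ∧ v ≠ 0 ∧ hammingNorm v = w}.Nonempty :=
      ⟨hammingNorm v0, v0, h0, h0ne, rfl⟩
    rw [hdB]; exact Nat.sInf_mem hne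
  obtain ⟨xT, hxTker, hxTne, hxTw⟩ :
      ∃ v : Fin mA → F, HAᵀ.mulVec v = 0 ∧ v ≠ 0 ∧ hammingNorm v = dAT := by
    obtain ⟨v0, h0, h0ne⟩ := exists_ker_vec HAᵀ hrAm
    have hne : {w : ℕ | ∃ v : Fin mA → F, HAᵀ.mulVec v = 0 ∧ v ≠ 0 ∧ hammingNorm v = w}.Nonempty :=
      ⟨hammingNorm v0, v0, h0, h0ne, rfl⟩
    rw [hdAT]; exact Nat.sInf_mem hne
  obtain ⟨zT, hzTker, hzTne, hzTw⟩ :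
      ∃ v : Fin mB → F, HBᵀ.mulVec v = 0 ∧ v ≠ 0 ∧ hammingNorm v = dBT := by
    obtain ⟨v0, h0, h0ne⟩ := exists_ker_vec HBᵀ hrBm
    have hne : {w : ℕ | ∃ v : Fin mB → F, HBᵀ.mulVec v = 0 ∧ v ≠ 0 ∧ hammingNorm v = w}.Nonempty :=
      ⟨hammingNorm v0, v0, h0, h0ne, rfl⟩
    rw [hdBT]; exact Nat.sInf_mem hne
  -- supports
  obtain ⟨k0, hk0⟩ := Function.ne_iff.mp hxne
  obtain ⟨b0, hb0⟩ := Function.ne_iff.mp hzne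
  obtain ⟨a0, ha0⟩ := Function.ne_iff.mp hxTne
  obtain ⟨l0, hl0⟩ := Function.ne_iff.mp hzTne
  simp only [Pi.zero_apply] at hk0 hb0 ha0 hl0
  -- kernel sums
  have hxs : ∀ i, ∑ k, HA i k * x k = 0 := fun i => by
    simpa [Matrix.mulVec, dotProduct] using congrFun hxker i
  have hzs : ∀ j, ∑ b, HB j b * z b = 0 := fun j => by
    simpa [Matrix.mulVec, dotProduct] using congrFun hzker j
  have hxTs : ∀ i, ∑ a, HAᵀ i a * xT a = 0 := fun i => by
    simpa [Matrix.mulVec, dotProduct] using congrFun hxTker i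
  have hzTs : ∀ j, ∑ l, HBᵀ j l * zT l = 0 := fun j => by
    simpa [Matrix.mulVec, dotProduct] using congrFun hzTker j
  -- the four logical vectors
  set u1 : ((Fin mA × Fin nB) ⊕ (Fin nA × Fin mB)) → F :=
    Sum.elim 0 (fun p => x p.1 * (Pi.single l0 1 : Fin mB → F) p.2) with hu1
  set u2 : ((Fin mA × Fin nB) ⊕ (Fin nA × Fin mB)) → F :=
    Sum.elim (fun p => (Pi.single a0 1 : Fin mA → F) p.1 * z p.2) 0 with hu2
  set u3 : ((Fin mA × Fin nB) ⊕ (Fin nA × Fin mB)) → F :=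
    Sum.elim (fun p => xT p.1 * (Pi.single b0 1 : Fin nB → F) p.2) 0 with hu3
  set u4 : ((Fin mA × Fin nB) ⊕ (Fin nA × Fin mB)) → F :=
    Sum.elim 0 (fun p => (Pi.single k0 1 : Fin nA → F) p.1 * zT p.2) with hu4
  -- kernel memberships
  have hker1 : HX.mulVec u1 = 0 := by
    rw [hHX, hu1, fromCols_mulVec_sumElim]
    funext ij
    simp only [Pi.add_apply, Pi.zero_apply, Matrix.mulVec, dotProduct, Matrix.mulVec_zero]
    rw [kron_pair HA (1 : Matrix (Fin mB) (Fin mB) F) ij x (Pi.single l0 1), hxs ij.1, zero_mul]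
    simp
  have hker2 : HX.mulVec u2 = 0 := by
    rw [hHX, hu2, fromCols_mulVec_sumElim]
    funext ij
    simp only [Pi.add_apply, Pi.zero_apply, Matrix.mulVec, dotProduct, Matrix.mulVec_zero]
    rw [kron_pair (1 : Matrix (Fin mA) (Fin mA) F) HB ij (Pi.single a0 1) z, hzs ij.2, mul_zero]
    simp
  have hker3 : HZ.mulVec u3 = 0 := by
    rw [hHZ, hu3, fromCols_mulVec_sumElim]
    funext ij
    simp only [Pi.add_apply, Pi.zero_apply, Matrix.mulVec, dotProduct, Matrix.mulVec_zero]
    rw [kron_pair HAᵀ (1 : Matrix (Fin nB) (Fin nB) F) ij xT (Pi.single b0 1), hxTs ij.1,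
      zero_mul]
    simp
  have hker4 : HZ.mulVec u4 = 0 := by
    rw [hHZ, hu4, fromCols_mulVec_sumElim]
    funext ij
    simp only [Pi.add_apply, Pi.zero_apply, Matrix.mulVec, dotProduct, Matrix.mulVec_zero,
      Matrix.neg_apply, neg_mul, Finset.sum_neg_distrib]
    rw [kron_pair (1 : Matrix (Fin nA) (Fin nA) F) HBᵀ ij (Pi.single k0 1) zT, hzTs ij.2,
      mul_zero, neg_zero]
    simp
  -- row pairings: rows of HZ pair to zero with u3 and u4
  have hrowsZ3 : ∀ i, ∑ j, HZ i j * u3 j = 0 := by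
    intro i
    rw [hHZ, hu3]
    rw [Fintype.sum_sum_type]
    simp only [fromCols_apply_inl, fromCols_apply_inr, Sum.elim_inl, Sum.elim_inr,
      Pi.zero_apply, mul_zero, Finset.sum_const_zero, add_zero]
    rw [kron_pair HAᵀ (1 : Matrix (Fin nB) (Fin nB) F) i xT (Pi.single b0 1), hxTs i.1, zero_mul]
  have hrowsZ4 : ∀ i, ∑ j, HZ i j * u4 j = 0 := by
    intro i
    rw [hHZ, hu4]
    rw [Fintype.sum_sum_type]
    simp only [fromCols_apply_inl, fromCols_apply_inr, Sum.elim_inl, Sum.elim_inr,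
      Pi.zero_apply, mul_zero, Finset.sum_const_zero, zero_add, Matrix.neg_apply, neg_mul,
      Finset.sum_neg_distrib]
    rw [kron_pair (1 : Matrix (Fin nA) (Fin nA) F) HBᵀ i (Pi.single k0 1) zT, hzTs i.2,
      mul_zero, neg_zero]
  -- rows of HX pair to zero with u1 and u2
  have hrowsX1 : ∀ i, ∑ j, HX i j * u1 j = 0 := by
    intro i
    rw [hHX, hu1]
    rw [Fintype.sum_sum_type]
    simp only [fromCols_apply_inl, fromCols_apply_inr, Sum.elim_inl, Sum.elim_inr,
      Pi.zero_apply, mul_zero, Finset.sum_const_zero, zero_add]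
    rw [kron_pair HA (1 : Matrix (Fin mB) (Fin mB) F) i x (Pi.single l0 1), hxs i.1, zero_mul]
  have hrowsX2 : ∀ i, ∑ j, HX i j * u2 j = 0 := by
    intro i
    rw [hHX, hu2]
    rw [Fintype.sum_sum_type]
    simp only [fromCols_apply_inl, fromCols_apply_inr, Sum.elim_inl, Sum.elim_inr,
      Pi.zero_apply, mul_zero, Finset.sum_const_zero, add_zero]
    rw [kron_pair (1 : Matrix (Fin mA) (Fin mA) F) HB i (Pi.single a0 1) z, hzs i.2, mul_zero]
  -- nonzero pairings
  have hpair14 : ∑ j, u1 j * u4 j ≠ 0 := by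
    rw [hu1, hu4, Fintype.sum_sum_type]
    simp only [Sum.elim_inl, Sum.elim_inr, Pi.zero_apply, zero_mul, mul_zero,
      Finset.sum_const_zero, zero_add]
    have : ∑ p : Fin nA × Fin mB,
        (x p.1 * (Pi.single l0 1 : Fin mB → F) p.2)
          * ((Pi.single k0 1 : Fin nA → F) p.1 * zT p.2)
        = (∑ k, x k * (Pi.single k0 1 : Fin nA → F) k)
          * (∑ l, (Pi.single l0 1 : Fin mB → F) l * zT l) := by
      rw [Finset.sum_mul_sum, Fintype.sum_prod_type]
      refine Finset.sum_congr rfl fun k _ => Finset.sum_congr rfl fun l _ => ?_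
      ring
    rw [this, single_dot]
    have h2 : ∑ l, (Pi.single l0 1 : Fin mB → F) l * zT l = zT l0 := by
      simp [Pi.single_apply, ite_mul]
    rw [h2]
    exact mul_ne_zero hk0 hl0
  have hpair23 : ∑ j, u2 j * u3 j ≠ 0 := by
    rw [hu2, hu3, Fintype.sum_sum_type]
    simp only [Sum.elim_inl, Sum.elim_inr, Pi.zero_apply, zero_mul, mul_zero,
      Finset.sum_const_zero, add_zero]
    have : ∑ p : Fin mA × Fin nB,
        ((Pi.single a0 1 : Fin mA → F) p.1 * z p.2)
          * (xT p.1 * (Pi.single b0 1 : Fin nB → F) p.2)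
        = (∑ a, (Pi.single a0 1 : Fin mA → F) a * xT a)
          * (∑ b, z b * (Pi.single b0 1 : Fin nB → F) b) := by
      rw [Finset.sum_mul_sum, Fintype.sum_prod_type]
      refine Finset.sum_congr rfl fun k _ => Finset.sum_congr rfl fun l _ => ?_
      ring
    rw [this, single_dot]
    have h1 : ∑ a, (Pi.single a0 1 : Fin mA → F) a * xT a = xT a0 := by
      simp [Pi.single_apply, ite_mul]
    rw [h1]
    exact mul_ne_zero ha0 hb0
  -- non-membership facts
  have hns1 : u1 ∉ Submodule.span F (Set.range HZ) := not_mem_span_rows HZ u1 u4 hrowsZ4 hpair14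
  have hns2 : u2 ∉ Submodule.span F (Set.range HZ) := not_mem_span_rows HZ u2 u3 hrowsZ3 hpair23
  have hns3 : u3 ∉ Submodule.span F (Set.range HX) := not_mem_span_rows HX u3 u2 hrowsX2
    (by rw [show ∑ j, u3 j * u2 j = ∑ j, u2 j * u3 j from Finset.sum_congr rfl fun j _ => mul_comm _ _]; exact hpair23)
  have hns4 : u4 ∉ Submodule.span F (Set.range HX) := not_mem_span_rows HX u4 u1 hrowsX1
    (by rw [show ∑ j, u4 j * u1 j = ∑ j, u1 j * u4 j from Finset.sum_congr rfl fun j _ => mul_comm _ _]; exact hpair14)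
  -- weights
  have hw1 : hammingNorm u1 = dA := by rw [hu1, ham_elim_right, ham_mul_single_right, hxw]
  have hw2 : hammingNorm u2 = dB := by rw [hu2, ham_elim_left, ham_mul_single_left, hzw]
  have hw3 : hammingNorm u3 = dAT := by rw [hu3, ham_elim_left, ham_mul_single_right, hxTw]
  have hw4 : hammingNorm u4 = dBT := by rw [hu4, ham_elim_right, ham_mul_single_left, hzTw]
  refine ⟨⟨u1, hker1, hns1⟩, ⟨u3, hker3, hns3⟩, ?_, ?_⟩
  · exact le_min (Nat.sInf_le ⟨u1, hker1, hns1, hw1⟩) (Nat.sInf_le ⟨u2, hker2, hns2, hw2⟩)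
  · exact le_min (Nat.sInf_le ⟨u3, hker3, hns3, hw3⟩) (Nat.sInf_le ⟨u4, hker4, hns4, hw4⟩)
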